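/- Encoding of the CTL existential Until: let M be an HDML model whose underlying cubical set satisfies Q_n = ∅ for all n > 1. For every state q_0 ∈ Q_0 and formulas φ, φ': M,q_0 ⊨ (φ ∨ ⟨t⟩⊤) U_C (φ' ∧ ¬⟨t⟩⊤) if and only if there exists a finite sequence of states u_1, …, u_k ∈ Q_0 with u_1 = q_0 such that M,u_k ⊨ φ', M,u_i ⊨ φ for all 1 ≤ i < k, and for each 1 < i ≤ k there exists e ∈ Q_1 with s_1(e) = u_{i-1} and t_1(e) = u_i. -/

import Mathlib

inductive HForm (Phi : Type) : Type
  | atom : Phi → HForm Phi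
  | bot  : HForm Phi
  | imp  : HForm Phi → HForm Phi → HForm Phi
  | diaS : HForm Phi → HForm Phi
  | diaT : HForm Phi → HForm Phi
  deriving DecidableEq

namespace HForm

variable {Phi : Type}

def neg (φ : HForm Phi) : HForm Phi := imp φ bot

def top : HForm Phi := neg bot

def or' (φ ψ : HForm Phi) : HForm Phi := imp (neg φ) ψ

def and' (φ ψ : HForm Phi) : HForm Phi := neg (imp φ (neg ψ))

def iff' (φ ψ : HForm Phi) : HForm Phi := and' (imp φ ψ) (imp ψ φ)

def boxS (φ : HForm Phi) : HForm Phi := neg (diaS (neg φ))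

def boxT (φ : HForm Phi) : HForm Phi := neg (diaT (neg φ))

/-- The size of a formula: the number of occurrences of atomic propositions, `⊥`,
Boolean connectives `→`, and modal symbols `⟨s⟩`, `⟨t⟩`. -/
def size : HForm Phi → ℕ
  | atom _ => 1
  | bot => 1
  | imp a b => size a + size b + 1
  | diaS a => size a + 1
  | diaT a => size a + 1

/-- `iterT i ψ` is `⟨t⟩^i ψ`, the `i`-fold application of `⟨t⟩` to `ψ`. -/
def iterT : ℕ → HForm Phi → HForm Phi
  | 0, ψ => ψ
  | n + 1, ψ => diaT (iterT n ψ)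

/-- The subformula closure `C(φ)`. -/
def closure [DecidableEq Phi] : HForm Phi → Finset (HForm Phi)
  | atom p => {atom p}
  | bot => {bot}
  | imp a b => insert (imp a b) (closure a ∪ closure b)
  | diaS a => insert (diaS a) (closure a)
  | diaT a => insert (diaT a) (closure a)

/-- The upwards concurrency degree `↑deg`. -/
def updeg : HForm Phi → ℕ
  | atom _ => 0
  | bot => 0
  | imp a b => max (updeg a) (updeg b)
  | diaS a => updeg a + 1
  | diaT a => updeg a - 1

end HForm

/-- The data of a cubical set: a family of cells `Q_n := cell n` together with, for each
`n ≥ 1` and each `1 ≤ i ≤ n`, source and target maps `s_i, t_i : Q_n → Q_{n-1}`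
(here `src n i` and `tgt n i` are the maps `s_{i+1}, t_{i+1} : Q_{n+1} → Q_n` for `i : Fin (n+1)`). -/
structure PreCubical : Type 1 where
  cell : ℕ → Type
  src : ∀ n : ℕ, Fin (n + 1) → cell (n + 1) → cell n
  tgt : ∀ n : ℕ, Fin (n + 1) → cell (n + 1) → cell n

/-- The cubical laws `α_i ∘ β_j = β_{j-1} ∘ α_i` for `1 ≤ i < j ≤ n` and `α, β ∈ {s, t}`:
with 0-based indices `i j : Fin (n+1)`, the 1-based indices are `I = i+1` and `J = j+2`,
so that `I < J` becomes `i ≤ j`. -/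
def PreCubical.CubicalLaws (H : PreCubical) : Prop :=
  (∀ (n : ℕ) (i j : Fin (n + 1)), (i : ℕ) ≤ (j : ℕ) → ∀ q : H.cell (n + 2),
      H.src n i (H.src (n + 1) j.succ q) = H.src n j (H.src (n + 1) i.castSucc q)) ∧
  (∀ (n : ℕ) (i j : Fin (n + 1)), (i : ℕ) ≤ (j : ℕ) → ∀ q : H.cell (n + 2),
      H.src n i (H.tgt (n + 1) j.succ q) = H.tgt n j (H.src (n + 1) i.castSucc q)) ∧
  (∀ (n : ℕ) (i j : Fin (n + 1)), (i : ℕ) ≤ (j : ℕ) → ∀ q : H.cell (n + 2),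
      H.tgt n i (H.src (n + 1) j.succ q) = H.src n j (H.tgt (n + 1) i.castSucc q)) ∧
  (∀ (n : ℕ) (i j : Fin (n + 1)), (i : ℕ) ≤ (j : ℕ) → ∀ q : H.cell (n + 2),
      H.tgt n i (H.tgt (n + 1) j.succ q) = H.tgt n j (H.tgt (n + 1) i.castSucc q))

/-- HDML satisfaction over the data of a cubical set with a valuation. -/
def PreCubical.Sat (H : PreCubical) {Phi : Type} (V : ∀ n : ℕ, H.cell n → Set Phi) :
    HForm Phi → ∀ n : ℕ, H.cell n → Prop
  | .atom p, n, q => p ∈ V n q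
  | .bot, _, _ => False
  | .imp a b, n, q => PreCubical.Sat H V a n q → PreCubical.Sat H V b n q
  | .diaS a, n, q => ∃ (q' : H.cell (n + 1)) (i : Fin (n + 1)),
      H.src n i q' = q ∧ PreCubical.Sat H V a (n + 1) q'
  | .diaT _, 0, _ => False
  | .diaT a, m + 1, q => ∃ i : Fin (m + 1), PreCubical.Sat H V a m (H.tgt m i q)

/-- An HDML model: a cubical set together with a valuation. -/
structure HDMLModel (Phi : Type) : Type 1 where
  pre : PreCubical
  laws : pre.CubicalLaws
  val : ∀ n : ℕ, pre.cell n → Set Phi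

/-- Satisfaction `M,q ⊨ φ` in an HDML model. -/
def HDMLModel.Sat {Phi : Type} (M : HDMLModel Phi) : HForm Phi → ∀ n : ℕ, M.pre.cell n → Prop :=
  M.pre.Sat M.val

/-- A simple step in a cubical set: either going up along a source map or down along a
target map. -/
inductive Step (H : PreCubical) : (Σ n : ℕ, H.cell n) → (Σ n : ℕ, H.cell n) → Prop
  | up {n : ℕ} (i : Fin (n + 1)) (q : H.cell (n + 1)) : Step H ⟨n, H.src n i q⟩ ⟨n + 1, q⟩
  | down {n : ℕ} (i : Fin (n + 1)) (q : H.cell (n + 1)) : Step H ⟨n + 1, q⟩ ⟨n, H.tgt n i q⟩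

/-- The CTL-like Until `φ U_C φ'`: there is a path `π` from `q` to some `q'` such that `φ'`
holds at `q'` and `φ` holds at every cell of `π` different from `q'`. -/
def SatUntilC {Phi : Type} (M : HDMLModel Phi) (φ φ' : HForm Phi) {n : ℕ}
    (q : M.pre.cell n) : Prop :=
  ∃ l : List (Σ m : ℕ, M.pre.cell m),
    List.Chain (Step M.pre) ⟨n, q⟩ l ∧
    M.Sat φ' ((⟨n, q⟩ :: l).getLast (List.cons_ne_nil _ _)).1
      ((⟨n, q⟩ :: l).getLast (List.cons_ne_nil _ _)).2 ∧
    ∀ z ∈ (⟨n, q⟩ :: l : List (Σ m : ℕ, M.pre.cell m)),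
      z ≠ (⟨n, q⟩ :: l).getLast (List.cons_ne_nil _ _) → M.Sat φ z.1 z.2

section Aux

open HForm

variable {Phi : Type} (M : HDMLModel Phi)

private lemma sat_or_zero (φ : HForm Phi) (q : M.pre.cell 0) :
    M.Sat (or' φ (diaT top)) 0 q ↔ M.Sat φ 0 q := by
  simp [HDMLModel.Sat, PreCubical.Sat, HForm.or', HForm.neg]

private lemma sat_or_one (φ : HForm Phi) (q : M.pre.cell 1) :
    M.Sat (or' φ (diaT top)) 1 q :=
  fun _ => ⟨0, fun h => h⟩

private lemma sat_and_zero (φ' : HForm Phi) (q : M.pre.cell 0) :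
    M.Sat (and' φ' (neg (diaT top))) 0 q ↔ M.Sat φ' 0 q := by
  simp [HDMLModel.Sat, PreCubical.Sat, HForm.and', HForm.neg]

private lemma sat_and_one (φ' : HForm Phi) (q : M.pre.cell 1) :
    ¬ M.Sat (and' φ' (neg (diaT top))) 1 q := by
  simp [HDMLModel.Sat, PreCubical.Sat, HForm.and', HForm.neg, HForm.top]

private lemma step_from_zero (q : M.pre.cell 0)
    (a : Σ m, M.pre.cell m) (h : Step M.pre ⟨0, q⟩ a) :
    ∃ e : M.pre.cell 1, a = ⟨1, e⟩ ∧ M.pre.src 0 0 e = q := by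
  cases h with
  | up i e => exact ⟨e, rfl, by rw [Fin.fin_one_eq_zero i]⟩

private lemma step_from_one
    (hK : ∀ n : ℕ, 1 < n → IsEmpty (M.pre.cell n)) (e : M.pre.cell 1)
    (a : Σ m, M.pre.cell m) (h : Step M.pre ⟨1, e⟩ a) :
    a = ⟨0, M.pre.tgt 0 0 e⟩ := by
  cases h with
  | up i q => exact ((hK 2 (by norm_num)).false q).elim
  | down i q => rw [Fin.fin_one_eq_zero i]

/-- The right-hand side of the encoding theorem, as a predicate on the starting state. -/
private def RHS (φ φ' : HForm Phi) (q0 : M.pre.cell 0) : Prop :=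
  ∃ (k : ℕ) (u : Fin (k + 1) → M.pre.cell 0),
    u 0 = q0 ∧
    M.Sat φ' 0 (u (Fin.last k)) ∧
    (∀ i : Fin (k + 1), i ≠ Fin.last k → M.Sat φ 0 (u i)) ∧
    ∀ i : Fin k, ∃ e : M.pre.cell 1,
      M.pre.src 0 0 e = u i.castSucc ∧ M.pre.tgt 0 0 e = u i.succ

private lemma rhs_base (φ φ' : HForm Phi) (q0 : M.pre.cell 0)
    (h : M.Sat φ' 0 q0) : RHS M φ φ' q0 := by
  refine ⟨0, fun _ => q0, rfl, h, ?_, fun i => i.elim0⟩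
  intro i hi
  exact absurd (Fin.fin_one_eq_zero i) hi

private lemma fwdAux (hK : ∀ n : ℕ, 1 < n → IsEmpty (M.pre.cell n))
    (φ φ' : HForm Phi) : ∀ (N : ℕ) (l : List (Σ m : ℕ, M.pre.cell m)),
    l.length ≤ N → ∀ (q0 : M.pre.cell 0),
    List.Chain (Step M.pre) ⟨0, q0⟩ l →
    M.Sat (and' φ' (neg (diaT top)))
      (((⟨0, q0⟩ : Σ m, M.pre.cell m) :: l).getLast (List.cons_ne_nil _ _)).1
      (((⟨0, q0⟩ : Σ m, M.pre.cell m) :: l).getLast (List.cons_ne_nil _ _)).2 →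
    (∀ z ∈ ((⟨0, q0⟩ : Σ m, M.pre.cell m) :: l),
      z ≠ ((⟨0, q0⟩ : Σ m, M.pre.cell m) :: l).getLast (List.cons_ne_nil _ _) →
      M.Sat (or' φ (diaT top)) z.1 z.2) →
    RHS M φ φ' q0 := by
  intro N
  induction N with
  | zero =>
    intro l hlen q0 hc hlast hoth
    rw [Nat.le_zero, List.length_eq_zero_iff] at hlen
    subst hlen
    exact rhs_base M φ φ' q0 ((sat_and_zero M φ' q0).1 hlast)
  | succ N ihN =>
  intro l hlen q0 hc hlast hoth
  rcases l with _ | ⟨a, _ | ⟨b, rest2⟩⟩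
  · exact rhs_base M φ φ' q0 ((sat_and_zero M φ' q0).1 hlast)
  · obtain ⟨h1, -⟩ := List.chain_cons.mp hc
    obtain ⟨e, rfl, -⟩ := step_from_zero M q0 a h1
    exact absurd hlast (sat_and_one M φ' e)
  · obtain ⟨h1, hc1⟩ := List.chain_cons.mp hc
    obtain ⟨e, rfl, hse⟩ := step_from_zero M q0 a h1
    obtain ⟨h2, hc2⟩ := List.chain_cons.mp hc1
    have hb := step_from_one M hK e b h2
    subst hb
    set q1 := M.pre.tgt 0 0 e with hq1
    have hgl : (((⟨0, q0⟩ : Σ m, M.pre.cell m) :: ⟨1, e⟩ :: ⟨0, q1⟩ :: rest2).getLast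
        (List.cons_ne_nil _ _)) =
        (((⟨0, q1⟩ : Σ m, M.pre.cell m) :: rest2).getLast (List.cons_ne_nil _ _)) := by
      rw [List.getLast_cons (List.cons_ne_nil _ _), List.getLast_cons (List.cons_ne_nil _ _)]
    by_cases hq : (⟨0, q0⟩ : Σ m, M.pre.cell m) =
        (((⟨0, q0⟩ : Σ m, M.pre.cell m) :: ⟨1, e⟩ :: ⟨0, q1⟩ :: rest2).getLast
          (List.cons_ne_nil _ _))
    · rw [← hq] at hlast
      exact rhs_base M φ φ' q0 ((sat_and_zero M φ' q0).1 hlast)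
    · have hφ0 : M.Sat φ 0 q0 :=
        (sat_or_zero M φ q0).1 (hoth ⟨0, q0⟩ List.mem_cons_self hq)
      rw [hgl] at hlast
      have hoth' : ∀ z ∈ ((⟨0, q1⟩ : Σ m, M.pre.cell m) :: rest2),
          z ≠ ((⟨0, q1⟩ : Σ m, M.pre.cell m) :: rest2).getLast (List.cons_ne_nil _ _) →
          M.Sat (or' φ (diaT top)) z.1 z.2 := by
        intro z hz hne
        refine hoth z ?_ ?_
        · exact List.mem_cons_of_mem _ (List.mem_cons_of_mem _ hz)
        · rw [hgl]; exact hne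
      obtain ⟨k, u, hu0, hulast, humid, huedge⟩ :=
        ihN rest2 (by simp at hlen ⊢; omega) q1 hc2 hlast hoth'
      refine ⟨k + 1, Fin.cases q0 u, by simp, ?_, ?_, ?_⟩
      · rw [← Fin.succ_last]
        simp only [Fin.cases_succ]
        exact hulast
      · intro i hi
        induction i using Fin.cases with
        | zero => simpa using hφ0
        | succ j =>
          simp only [Fin.cases_succ]
          refine humid j fun h => ?_
          rw [h, Fin.succ_last] at hi
          exact hi rfl
      · intro i
        induction i using Fin.cases with
        | zero =>
          refine ⟨e, ?_, ?_⟩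
          · simpa using hse
          · simp only [Fin.cases_succ, hu0]
            exact hq1.symm
        | succ j =>
          obtain ⟨e', he1, he2⟩ := huedge j
          refine ⟨e', ?_, ?_⟩
          · simp only [← Fin.succ_castSucc, Fin.cases_succ]
            exact he1
          · simp only [Fin.cases_succ]
            exact he2

private lemma fwd (hK : ∀ n : ℕ, 1 < n → IsEmpty (M.pre.cell n))
    (φ φ' : HForm Phi) (l : List (Σ m : ℕ, M.pre.cell m)) (q0 : M.pre.cell 0)
    (hc : List.Chain (Step M.pre) ⟨0, q0⟩ l)
    (hlast : M.Sat (and' φ' (neg (diaT top)))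
      (((⟨0, q0⟩ : Σ m, M.pre.cell m) :: l).getLast (List.cons_ne_nil _ _)).1
      (((⟨0, q0⟩ : Σ m, M.pre.cell m) :: l).getLast (List.cons_ne_nil _ _)).2)
    (hoth : ∀ z ∈ ((⟨0, q0⟩ : Σ m, M.pre.cell m) :: l),
      z ≠ ((⟨0, q0⟩ : Σ m, M.pre.cell m) :: l).getLast (List.cons_ne_nil _ _) →
      M.Sat (or' φ (diaT top)) z.1 z.2) :
    RHS M φ φ' q0 :=
  fwdAux M hK φ φ' l.length l le_rfl q0 hc hlast hoth

private lemma bwd (φ φ' : HForm Phi) :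
    ∀ (k : ℕ) (u : Fin (k + 1) → M.pre.cell 0),
    M.Sat φ' 0 (u (Fin.last k)) →
    (∀ i : Fin (k + 1), i ≠ Fin.last k → M.Sat φ 0 (u i)) →
    (∀ i : Fin k, ∃ e : M.pre.cell 1,
      M.pre.src 0 0 e = u i.castSucc ∧ M.pre.tgt 0 0 e = u i.succ) →
    SatUntilC M (or' φ (diaT top)) (and' φ' (neg (diaT top))) (u 0) := by
  intro k
  induction k with
  | zero =>
    intro u hlast _ _
    refine ⟨[], List.Chain.nil, ?_, ?_⟩
    · exact (sat_and_zero M φ' (u 0)).2 hlast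
    · intro z hz hne
      simp only [List.mem_singleton] at hz
      subst hz
      exact absurd rfl hne
  | succ k ih =>
    intro u hlast hmid hedge
    obtain ⟨e, he1, he2⟩ := hedge 0
    have hu' := ih (fun j => u j.succ)
      (by simp only [Fin.succ_last]; exact hlast)
      (by
        intro i hi
        refine hmid i.succ fun h => ?_
        rw [← Fin.succ_last] at h
        exact hi (Fin.succ_injective _ h))
      (by
        intro i
        obtain ⟨e', h1, h2⟩ := hedge i.succ
        refine ⟨e', ?_, h2⟩
        simp only [← Fin.succ_castSucc] at h1
        exact h1)
    obtain ⟨l', hc', hl', ho'⟩ := hu'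
    refine ⟨⟨1, e⟩ :: ⟨0, u (Fin.succ 0)⟩ :: l', ?_, ?_, ?_⟩
    · refine List.Chain.cons ?_ (List.Chain.cons ?_ hc')
      · have h := Step.up (H := M.pre) (0 : Fin 1) e
        rw [he1, Fin.castSucc_zero] at h
        exact h
      · have h := Step.down (H := M.pre) (0 : Fin 1) e
        rw [he2] at h
        exact h
    · rw [List.getLast_cons (List.cons_ne_nil _ _), List.getLast_cons (List.cons_ne_nil _ _)]
      exact hl'
    · intro z hz hne
      rw [List.getLast_cons (List.cons_ne_nil _ _),
        List.getLast_cons (List.cons_ne_nil _ _)] at hne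
      simp only [List.mem_cons] at hz
      rcases hz with rfl | rfl | hz
      · refine (sat_or_zero M φ (u 0)).2 ?_
        refine hmid 0 fun h => ?_
        simp [Fin.ext_iff] at h
      · exact sat_or_one M φ e
      · exact ho' z (List.mem_cons.mpr hz) hne

end Aux

/-- Encoding of the CTL existential Until: over an HDML model with `Q_n = ∅`
for `n > 1`, and a state `q₀ ∈ Q_0`:
`M,q₀ ⊨ (φ ∨ ⟨t⟩⊤) U_C (φ' ∧ ¬⟨t⟩⊤)` iff there is a finite sequence of states starting at
`q₀`, ending in a state satisfying `φ'`, all earlier states satisfying `φ`, and consecutive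
states linked by a transition `e ∈ Q_1` with `s_1(e)` the earlier and `t_1(e)` the later. -/
theorem ctl_until_encoding {Phi : Type} (M : HDMLModel Phi)
    (hK : ∀ n : ℕ, 1 < n → IsEmpty (M.pre.cell n)) (q0 : M.pre.cell 0)
    (φ φ' : HForm Phi) :
    SatUntilC M (HForm.or' φ (HForm.diaT HForm.top))
        (HForm.and' φ' (HForm.neg (HForm.diaT HForm.top))) q0 ↔
    ∃ (k : ℕ) (u : Fin (k + 1) → M.pre.cell 0),
      u 0 = q0 ∧
      M.Sat φ' 0 (u (Fin.last k)) ∧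
      (∀ i : Fin (k + 1), i ≠ Fin.last k → M.Sat φ 0 (u i)) ∧
      ∀ i : Fin k, ∃ e : M.pre.cell 1,
        M.pre.src 0 0 e = u i.castSucc ∧ M.pre.tgt 0 0 e = u i.succ := by
  constructor
  · rintro ⟨l, hc, hlast, hoth⟩
    exact fwd M hK φ φ' l q0 hc hlast hoth
  · rintro ⟨k, u, hu0, hlast, hmid, hedge⟩
    have := bwd M φ φ' k u hlast hmid hedge
    rwa [hu0] at this
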